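/- Let ν ≥ 0, n ∈ ℕ₀ and let f(x) = Σ_{k=0}^n f_k x^k be a real polynomial of degree at most n. Define the associated polynomial q(t) = Σ_{k=0}^n f_k (−1)^k k! t^k L_k^ν(t). Then for every x > 0, f(x) · ρ_ν(x) = ∫₀^∞ t^{ν−1} e^{-t - x/t} q(t) dt; equivalently f(x) = (1/ρ_ν(x)) ∫₀^∞ t^{ν−1} e^{-t - x/t} q(t) dt. -/

import Mathlib

open MeasureTheory Real Set

/-- The scaled Macdonald function `ρ_ν(x) = ∫₀^∞ t^(ν-1) e^(-t - x/t) dt`. -/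
noncomputable def rho (ν : ℝ) (x : ℝ) : ℝ :=
  ∫ t in Ioi (0:ℝ), t ^ (ν - 1) * Real.exp (-t - x / t)

/-- The generalized (associated) Laguerre polynomial `L_n^ν`. -/
noncomputable def laguerre (n : ℕ) (ν : ℝ) (t : ℝ) : ℝ :=
  ∑ k ∈ Finset.range (n + 1), ((-1 : ℝ) ^ k / k.factorial) *
    (Real.Gamma (n + ν + 1) / (Real.Gamma (k + ν + 1) * (n - k).factorial)) * t ^ k

noncomputable def cc (ν : ℝ) (k j : ℕ) : ℝ :=
  (-1:ℝ)^(k+j) * (k.choose j) * (Real.Gamma (k+ν+1) / Real.Gamma (j+ν+1))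

lemma exp_negdiv_le (x t : ℝ) (hx : 0 < x) (ht : 0 < t) (m : ℕ) :
    Real.exp (-(x / t)) ≤ m.factorial * t ^ m / x ^ m := by
  have h0 : (x / t) ^ m / m.factorial ≤ Real.exp (x / t) :=
    Real.pow_div_factorial_le_exp (x := x / t) (by positivity) m
  have hp : (0:ℝ) < (x / t) ^ m / m.factorial := by positivity
  rw [Real.exp_neg]
  calc (Real.exp (x/t))⁻¹ ≤ ((x / t) ^ m / m.factorial)⁻¹ := inv_anti₀ hp h0
    _ = m.factorial * t ^ m / x ^ m := by rw [div_pow]; field_simp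

lemma integrableOn_kernel (μ x : ℝ) (hx : 0 < x) :
    IntegrableOn (fun t : ℝ => t ^ (μ - 1) * Real.exp (-t - x / t)) (Ioi 0) := by
  obtain ⟨m, hm⟩ := exists_nat_gt (1 - μ)
  have hm' : (0:ℝ) < μ + m := by linarith
  have hg : IntegrableOn
      (fun t : ℝ => (m.factorial / x ^ m) * (Real.exp (-t) * t ^ (μ + m - 1))) (Ioi 0) :=
    (Real.GammaIntegral_convergent hm').const_mul _
  apply Integrable.mono' hg
  · apply ContinuousOn.aestronglyMeasurable _ measurableSet_Ioi
    apply ContinuousOn.mul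
    · exact fun t ht => (Real.continuousAt_rpow_const t _ (Or.inl (ne_of_gt ht))).continuousWithinAt
    · apply Real.continuous_exp.comp_continuousOn
      exact (continuousOn_id.neg).sub (continuousOn_const.div continuousOn_id fun t ht => ne_of_gt ht)
  · filter_upwards [self_mem_ae_restrict measurableSet_Ioi] with t ht
    rw [mem_Ioi] at ht
    have hb := exp_negdiv_le x t hx ht m
    have hnn : (0:ℝ) ≤ t ^ (μ - 1) := Real.rpow_nonneg ht.le _
    rw [Real.norm_eq_abs, abs_of_nonneg (by positivity)]
    calc t ^ (μ - 1) * Real.exp (-t - x / t)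
        = (Real.exp (-t) * t ^ (μ - 1)) * Real.exp (-(x / t)) := by
          rw [show -t - x / t = -t + -(x / t) by ring, Real.exp_add]; ring
      _ ≤ (Real.exp (-t) * t ^ (μ - 1)) * (m.factorial * t ^ m / x ^ m) := by
          exact mul_le_mul_of_nonneg_left hb (by positivity)
      _ = (m.factorial / x ^ m) * (Real.exp (-t) * (t ^ (μ - 1) * t ^ (m:ℝ))) := by
          rw [Real.rpow_natCast]; ring
      _ = (m.factorial / x ^ m) * (Real.exp (-t) * t ^ (μ + m - 1)) := by
          rw [← Real.rpow_add ht]; ring_nf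

lemma rho_rec (μ x : ℝ) (hx : 0 < x) :
    rho (μ + 1) x = μ * rho μ x + x * rho (μ - 1) x := by
  set E : ℝ → ℝ := fun t => Real.exp (-t - x / t) with hE
  set F : ℝ → ℝ := fun t => if t ≤ 0 then 0 else t ^ μ * E t with hF
  set f' : ℝ → ℝ := fun t => μ * (t ^ (μ - 1) * E t) - t ^ μ * E t + x * (t ^ (μ - 2) * E t)
    with hf'
  have hderiv : ∀ t ∈ Ioi (0:ℝ), HasDerivAt F (f' t) t := by
    intro t ht
    rw [mem_Ioi] at ht
    have h1 : HasDerivAt (fun s : ℝ => s ^ μ) (μ * t ^ (μ - 1)) t :=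
      Real.hasDerivAt_rpow_const (Or.inl (ne_of_gt ht))
    have h2 : HasDerivAt (fun s : ℝ => -s - x / s) (-1 - (0 * t - x * 1) / t ^ 2) t :=
      ((hasDerivAt_id t).neg).sub ((hasDerivAt_const t x).div (hasDerivAt_id t) (ne_of_gt ht))
    have h4 : HasDerivAt (fun s : ℝ => s ^ μ * Real.exp (-s - x / s)) _ t := h1.mul h2.exp
    have heq : F =ᶠ[nhds t] fun s => s ^ μ * Real.exp (-s - x / s) := by
      filter_upwards [Ioi_mem_nhds ht] with s hs
      simp [hF, hE, not_le.mpr (mem_Ioi.mp hs)]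
    refine (HasDerivAt.congr_of_eventuallyEq ?_ heq)
    refine h4.congr_deriv ?_
    symm
    have ht2 : t ^ (μ - 2) = t ^ μ / t ^ (2:ℕ) := by
      rw [show μ - 2 = μ - ((2:ℕ):ℝ) by norm_num, Real.rpow_sub ht, Real.rpow_natCast]
    simp only [hf', hE, ht2]
    field_simp
    ring
  have hcont : ContinuousWithinAt F (Ici 0) 0 := by
    obtain ⟨m, hm⟩ := exists_nat_gt (-μ)
    have hμm : (0:ℝ) < μ + m := by linarith
    have hF0 : F 0 = 0 := by simp [hF]
    rw [ContinuousWithinAt, hF0]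
    apply squeeze_zero' (g := fun t => (m.factorial / x ^ m) * t ^ (μ + m))
    · filter_upwards [self_mem_nhdsWithin] with t ht
      rw [mem_Ici] at ht
      rcases eq_or_lt_of_le ht with h | h
      · simp [hF, ← h]
      · simp only [hF, not_le.mpr h, if_neg, if_false]
        positivity
    · filter_upwards [self_mem_nhdsWithin] with t ht
      rw [mem_Ici] at ht
      rcases eq_or_lt_of_le ht with h | h
      · simp [hF, ← h, Real.zero_rpow (ne_of_gt hμm)]
      · simp only [hF, not_le.mpr h, if_false]
        have hb := exp_negdiv_le x t hx h m
        calc t ^ μ * E t = (t ^ μ * Real.exp (-t)) * Real.exp (-(x / t)) := by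
              simp only [hE]
              rw [show -t - x / t = -t + -(x / t) by ring, Real.exp_add]; ring
          _ ≤ (t ^ μ * 1) * (m.factorial * t ^ m / x ^ m) := by
              apply mul_le_mul _ hb (Real.exp_pos _).le (by positivity)
              have : Real.exp (-t) ≤ 1 := by
                rw [show (1:ℝ) = Real.exp 0 by simp]
                exact Real.exp_le_exp.mpr (by linarith)
              exact mul_le_mul_of_nonneg_left this (Real.rpow_nonneg h.le _)
          _ = (m.factorial / x ^ m) * (t ^ μ * t ^ (m:ℝ)) := by
              rw [Real.rpow_natCast]; ring
          _ = (m.factorial / x ^ m) * t ^ (μ + m) := by rw [← Real.rpow_add h]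
    · have hc : ContinuousAt (fun t : ℝ => (m.factorial / x ^ m : ℝ) * t ^ (μ + m)) 0 :=
        ((Real.continuousAt_rpow_const 0 (μ + m) (Or.inr hμm.le))).const_mul _
      have h0 : (fun t : ℝ => (m.factorial / x ^ m : ℝ) * t ^ (μ + m)) 0 = 0 := by
        simp [Real.zero_rpow (ne_of_gt hμm)]
      have := hc.tendsto
      simp only [Real.zero_rpow (ne_of_gt hμm), mul_zero] at this
      exact this.mono_left nhdsWithin_le_nhds
  have htop : Filter.Tendsto F Filter.atTop (nhds 0) := by
    have hg : Filter.Tendsto (fun t : ℝ => t ^ μ * Real.exp (-1 * t)) Filter.atTop (nhds 0) :=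
      tendsto_rpow_mul_exp_neg_mul_atTop_nhds_zero μ 1 one_pos
    apply squeeze_zero' ?_ ?_ hg
    · filter_upwards [Filter.Ioi_mem_atTop 0] with t ht
      rw [mem_Ioi] at ht
      simp only [hF, not_le.mpr ht, if_false]
      positivity
    · filter_upwards [Filter.Ioi_mem_atTop 0] with t ht
      rw [mem_Ioi] at ht
      simp only [hF, not_le.mpr ht, if_false, hE]
      rw [show -t - x / t = -t + -(x / t) by ring, Real.exp_add, neg_one_mul]
      have h1 : Real.exp (-(x / t)) ≤ 1 := by
        rw [show (1:ℝ) = Real.exp 0 by simp]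
        apply Real.exp_le_exp.mpr
        have : 0 < x / t := by positivity
        linarith
      calc t ^ μ * (Real.exp (-t) * Real.exp (-(x / t)))
          ≤ t ^ μ * (Real.exp (-t) * 1) := by
            apply mul_le_mul_of_nonneg_left _ (Real.rpow_nonneg ht.le _)
            exact mul_le_mul_of_nonneg_left h1 (Real.exp_pos _).le
        _ = t ^ μ * Real.exp (-t) := by ring
  have hint1 := integrableOn_kernel μ x hx
  have hint2 : IntegrableOn (fun t : ℝ => t ^ μ * Real.exp (-t - x / t)) (Ioi 0) := by
    have := integrableOn_kernel (μ + 1) x hx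
    simpa [show μ + 1 - 1 = μ by ring] using this
  have hint3 : IntegrableOn (fun t : ℝ => t ^ (μ - 2) * Real.exp (-t - x / t)) (Ioi 0) := by
    have := integrableOn_kernel (μ - 1) x hx
    simpa [show μ - 1 - 1 = μ - 2 by ring] using this
  have f'int : IntegrableOn f' (Ioi 0) :=
    ((hint1.const_mul μ).sub hint2).add (hint3.const_mul x)
  have key := integral_Ioi_of_hasDerivAt_of_tendsto hcont hderiv f'int htop
  have hF0 : F 0 = 0 := by simp [hF]
  rw [hF0, sub_zero] at key
  have hsplit : ∫ t in Ioi (0:ℝ), f' t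
      = μ * rho μ x - rho (μ + 1) x + x * rho (μ - 1) x := by
    have e1 : IntegrableOn (fun t : ℝ => μ * (t ^ (μ - 1) * Real.exp (-t - x / t))
        - t ^ μ * Real.exp (-t - x / t)) (Ioi 0) := (hint1.const_mul μ).sub hint2
    have e2 : IntegrableOn (fun t : ℝ => x * (t ^ (μ - 2) * Real.exp (-t - x / t)))
        (Ioi 0) := hint3.const_mul x
    have e3 : IntegrableOn (fun t : ℝ => μ * (t ^ (μ - 1) * Real.exp (-t - x / t)))
        (Ioi 0) := hint1.const_mul μ
    simp only [hf', hE]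
    rw [integral_add e1 e2, integral_sub e3 hint2, integral_const_mul, integral_const_mul]
    rw [rho, rho, rho, show μ + 1 - 1 = μ by ring, show μ - 1 - 1 = μ - 2 by ring]
  rw [key] at hsplit
  linarith

lemma cc_rec (ν : ℝ) (hν : 0 ≤ ν) (k j : ℕ) (hj : j ≤ k + 1) :
    cc ν (k+1) j = (if j = 0 then 0 else cc ν k (j-1))
      - (if j = k+1 then 0 else (ν + k + j + 1) * cc ν k j) := by
  have hGpos : ∀ a : ℝ, 0 < a → 0 < Real.Gamma a := fun a ha => Real.Gamma_pos_of_pos ha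
  have hG : Real.Gamma (↑(k+1) + ν + 1) = (↑k + ν + 1) * Real.Gamma (↑k + ν + 1) := by
    rw [show ((k+1:ℕ):ℝ) + ν + 1 = (↑k + ν + 1) + 1 by push_cast; ring,
      Real.Gamma_add_one (by positivity)]
  rcases Nat.eq_zero_or_pos j with rfl | hj1
  · -- j = 0
    simp only [if_pos rfl, cc, Nat.choose_zero_right]
    rw [if_neg (by omega : ¬ (0:ℕ) = k + 1), hG]
    push_cast
    ring
  · obtain ⟨i, rfl⟩ : ∃ i, j = i + 1 := ⟨j - 1, by omega⟩
    rw [if_neg (by omega : ¬ i + 1 = 0)]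
    have hg : Real.Gamma (↑(i+1) + ν + 1) = (↑i + ν + 1) * Real.Gamma (↑i + ν + 1) := by
      rw [show ((i+1:ℕ):ℝ) + ν + 1 = (↑i + ν + 1) + 1 by push_cast; ring,
        Real.Gamma_add_one (by positivity)]
    rcases eq_or_lt_of_le hj with heq | hlt
    · -- i = k
      have hik : i = k := by omega
      subst hik
      rw [if_pos rfl, sub_zero]
      simp only [cc, Nat.add_sub_cancel, Nat.choose_self]
      rw [hg]
      have hs1 : ((-1:ℝ))^(i+1+(i+1)) = 1 := by
        rw [show i+1+(i+1) = 2*(i+1) by ring, pow_mul]; norm_num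
      have hs2 : ((-1:ℝ))^(i+i) = 1 := by
        rw [show i+i = 2*i by ring, pow_mul]; norm_num
      rw [hs1, hs2]
      have hne : Real.Gamma (↑i + ν + 1) ≠ 0 := ne_of_gt (hGpos _ (by positivity))
      have hne2 : (↑i + ν + 1 : ℝ) ≠ 0 := by positivity
      field_simp
    · -- i + 1 ≤ k
      have hik : i + 1 ≤ k := by omega
      rw [if_neg (by omega : ¬ i + 1 = k + 1)]
      simp only [cc, Nat.add_sub_cancel]
      rw [hG, hg]
      have hs1 : ((-1:ℝ))^(k+1+(i+1)) = (-1:ℝ)^(k+i) := by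
        rw [show k+1+(i+1) = (k+i)+2 by ring, pow_add]; norm_num
      have hs2 : ((-1:ℝ))^(k+(i+1)) = -(-1:ℝ)^(k+i) := by
        rw [show k+(i+1) = (k+i)+1 by ring, pow_succ]; ring
      rw [hs1, hs2]
      have hA : ((k+1).choose (i+1) : ℝ) = (k.choose i : ℝ) + (k.choose (i+1) : ℝ) := by
        rw [Nat.choose_succ_succ]; push_cast; ring
      have hC : (k.choose (i+1) : ℝ) * (↑i+1) = (k.choose i : ℝ) * ((k:ℝ) - ↑i) := by
        have h := congrArg (fun n : ℕ => (n : ℝ)) (Nat.choose_succ_right_eq k i)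
        push_cast at h
        rw [Nat.cast_sub (by omega : i ≤ k)] at h
        push_cast at h
        linarith [h]
      have key : ((k+1).choose (i+1) : ℝ) * (↑k + ν + 1)
          = (k.choose i : ℝ) * (↑i + ν + 1) + (ν + ↑k + ↑i + 2) * (k.choose (i+1) : ℝ) := by
        rw [hA]; linear_combination -hC
      have hGk : Real.Gamma (↑k + ν + 1) ≠ 0 := ne_of_gt (hGpos _ (by positivity))
      have hGi : Real.Gamma (↑i + ν + 1) ≠ 0 := ne_of_gt (hGpos _ (by positivity))
      have hiν : (↑i + ν + 1 : ℝ) ≠ 0 := by positivity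
      have hGg : Real.Gamma (↑k + ν + 1) / Real.Gamma (↑i + ν + 1)
          = (Real.Gamma (↑k + ν + 1) / ((↑i + ν + 1) * Real.Gamma (↑i + ν + 1)))
            * (↑i + ν + 1) := by
        field_simp
      push_cast
      rw [hGg]
      linear_combination (Real.Gamma (↑k + ν + 1) / ((↑i + ν + 1) * Real.Gamma (↑i + ν + 1)))
        * (-1:ℝ)^(k+i) * key

lemma moments (ν : ℝ) (hν : 0 ≤ ν) (x : ℝ) (hx : 0 < x) (k : ℕ) :
    x ^ k * rho ν x = ∑ j ∈ Finset.range (k+1), cc ν k j * rho (ν + k + j) x := by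
  have rho_congr : ∀ a b : ℝ, a = b → rho a x = rho b x := fun a b h => by rw [h]
  induction k with
  | zero =>
    have hΓ : Real.Gamma ((0:ℕ) + ν + 1) ≠ 0 :=
      ne_of_gt (Real.Gamma_pos_of_pos (by push_cast; linarith))
    have h1 : cc ν 0 0 = 1 := by
      simp only [cc, Nat.choose_self, Nat.add_zero, pow_zero, Nat.cast_one, one_mul]
      rw [div_self hΓ]
    have h2 : ν + ((0:ℕ):ℝ) + ((0:ℕ):ℝ) = ν := by push_cast; ring
    rw [show (0:ℕ)+1 = 1 from rfl, Finset.sum_range_one, h1, h2, pow_zero, one_mul]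
  | succ k ih =>
    have hstep : ∀ j : ℕ, x * rho (ν + k + j) x
        = rho (ν + k + j + 1 + 1) x - (ν + k + j + 1) * rho (ν + k + j + 1) x := by
      intro j
      have h := rho_rec (ν + k + j + 1) x hx
      rw [show ν + (k:ℝ) + j + 1 - 1 = ν + k + j by ring] at h
      linarith
    calc x ^ (k+1) * rho ν x = x * (x ^ k * rho ν x) := by ring
      _ = ∑ j ∈ Finset.range (k+1), cc ν k j * (x * rho (ν + k + j) x) := by
          rw [ih, Finset.mul_sum]; apply Finset.sum_congr rfl; intros; ring
      _ = ∑ j ∈ Finset.range (k+1), (cc ν k j * rho (ν + k + j + 1 + 1) x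
            - (ν + k + j + 1) * cc ν k j * rho (ν + k + j + 1) x) := by
          apply Finset.sum_congr rfl; intro j _
          rw [hstep j]; ring
      _ = (∑ j ∈ Finset.range (k+1), cc ν k j * rho (ν + k + j + 1 + 1) x)
          - ∑ j ∈ Finset.range (k+1), (ν + k + j + 1) * cc ν k j * rho (ν + k + j + 1) x := by
          rw [Finset.sum_sub_distrib]
      _ = (∑ j ∈ Finset.range (k+2), (if j = 0 then 0 else cc ν k (j-1)) * rho (ν + (k+1:ℕ) + j) x)
          - ∑ j ∈ Finset.range (k+2), (if j = k+1 then 0 else (ν + k + j + 1) * cc ν k j) * rho (ν + (k+1:ℕ) + j) x := by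
          congr 1
          · rw [Finset.sum_range_succ' (fun j => (if j = 0 then (0:ℝ) else cc ν k (j-1)) * rho (ν + (k+1:ℕ) + j) x) (k+1)]
            norm_num
            apply Finset.sum_congr rfl; intro j _
            congr 1
            apply rho_congr; push_cast; ring
          · rw [Finset.sum_range_succ (fun j => (if j = k+1 then (0:ℝ) else (ν + ↑k + ↑j + 1) * cc ν k j) * rho (ν + ((k+1:ℕ):ℝ) + ↑j) x) (k+1)]
            norm_num
            apply Finset.sum_congr rfl; intro j hj
            rw [Finset.mem_range] at hj
            rw [if_neg (by omega : ¬ j = k + 1)]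
            congr 1
            apply rho_congr; push_cast; ring
      _ = ∑ j ∈ Finset.range (k+2), cc ν (k+1) j * rho (ν + (k+1:ℕ) + j) x := by
          rw [← Finset.sum_sub_distrib]
          apply Finset.sum_congr rfl; intro j hj
          rw [Finset.mem_range] at hj
          rw [cc_rec ν hν k j (by omega)]
          ring

lemma integrableOn_mono (ν x : ℝ) (hx : 0 < x) (m : ℕ) :
    IntegrableOn (fun t : ℝ => t ^ (ν - 1) * Real.exp (-t - x / t) * t ^ m) (Ioi 0) := by
  apply (integrableOn_kernel (ν + m) x hx).congr_fun _ measurableSet_Ioi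
  intro t ht
  rw [mem_Ioi] at ht
  dsimp only
  rw [show ν + (m:ℝ) - 1 = (ν - 1) + (m:ℝ) by ring, Real.rpow_add ht, Real.rpow_natCast]
  ring

lemma moment_integral (ν x : ℝ) (hx : 0 < x) (m : ℕ) :
    ∫ t in Ioi (0:ℝ), t ^ (ν - 1) * Real.exp (-t - x / t) * t ^ m = rho (ν + m) x := by
  rw [rho]
  apply setIntegral_congr_fun measurableSet_Ioi
  intro t ht
  rw [mem_Ioi] at ht
  dsimp only
  rw [show ν + (m:ℝ) - 1 = (ν - 1) + (m:ℝ) by ring, Real.rpow_add ht, Real.rpow_natCast]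
  ring

theorem polynomial_associated_representation (ν : ℝ) (hν : 0 ≤ ν) (n : ℕ) (f : ℕ → ℝ)
    (x : ℝ) (hx : 0 < x) :
    (∑ k ∈ Finset.range (n + 1), f k * x ^ k) * rho ν x
      = ∫ t in Ioi (0:ℝ), t ^ (ν - 1) * Real.exp (-t - x / t) *
          (∑ k ∈ Finset.range (n + 1), f k * (-1 : ℝ) ^ k * k.factorial * t ^ k * laguerre k ν t) := by
  have rho_congr : ∀ a b : ℝ, a = b → rho a x = rho b x := fun a b h => by rw [h]
  set D : ℕ → ℕ → ℝ := fun k j => f k * (-1:ℝ)^k * (k.factorial : ℝ) *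
    (((-1:ℝ))^j / (j.factorial : ℝ)) *
    (Real.Gamma (↑k + ν + 1) / (Real.Gamma (↑j + ν + 1) * ((k-j).factorial : ℝ))) with hD
  have hpt : ∀ t : ℝ, t ^ (ν - 1) * Real.exp (-t - x / t) *
        (∑ k ∈ Finset.range (n + 1), f k * (-1 : ℝ) ^ k * k.factorial * t ^ k * laguerre k ν t)
      = ∑ k ∈ Finset.range (n + 1), ∑ j ∈ Finset.range (k + 1),
          D k j * (t ^ (ν - 1) * Real.exp (-t - x / t) * t ^ (k + j)) := by
    intro t
    simp only [laguerre, hD, Finset.mul_sum]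
    apply Finset.sum_congr rfl; intro k _
    apply Finset.sum_congr rfl; intro j _
    rw [pow_add]
    ring
  have hint : ∀ k j : ℕ, IntegrableOn
      (fun t : ℝ => D k j * (t ^ (ν - 1) * Real.exp (-t - x / t) * t ^ (k + j))) (Ioi 0) :=
    fun k j => (integrableOn_mono ν x hx (k + j)).const_mul _
  have hDcc : ∀ k j : ℕ, j ≤ k → D k j = f k * cc ν k j := by
    intro k j hjk
    have hfact : ((k.choose j : ℝ)) * (j.factorial : ℝ) * ((k-j).factorial : ℝ)
        = (k.factorial : ℝ) := by
      exact_mod_cast congrArg (fun n : ℕ => (n:ℝ)) (Nat.choose_mul_factorial_mul_factorial hjk)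
    have hg : Real.Gamma (↑j + ν + 1) ≠ 0 :=
      ne_of_gt (Real.Gamma_pos_of_pos (by positivity))
    have hjf : (j.factorial : ℝ) ≠ 0 := Nat.cast_ne_zero.mpr (Nat.factorial_ne_zero j)
    have hkjf : ((k-j).factorial : ℝ) ≠ 0 := Nat.cast_ne_zero.mpr (Nat.factorial_ne_zero _)
    simp only [hD, cc]
    field_simp
    linear_combination (-(f k * (-1:ℝ)^k * (-1:ℝ)^j)) * hfact
  calc (∑ k ∈ Finset.range (n + 1), f k * x ^ k) * rho ν x
      = ∑ k ∈ Finset.range (n + 1), f k * (x ^ k * rho ν x) := by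
        rw [Finset.sum_mul]; apply Finset.sum_congr rfl; intros; ring
    _ = ∑ k ∈ Finset.range (n + 1), ∑ j ∈ Finset.range (k + 1),
          D k j * rho (ν + ↑(k + j)) x := by
        apply Finset.sum_congr rfl; intro k _
        rw [moments ν hν x hx k, Finset.mul_sum]
        apply Finset.sum_congr rfl; intro j hj
        rw [Finset.mem_range] at hj
        rw [hDcc k j (by omega)]
        rw [rho_congr (ν + ↑(k+j)) (ν + ↑k + ↑j) (by push_cast; ring)]
        ring
    _ = ∑ k ∈ Finset.range (n + 1), ∑ j ∈ Finset.range (k + 1),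
          ∫ t in Ioi (0:ℝ), D k j * (t ^ (ν - 1) * Real.exp (-t - x / t) * t ^ (k + j)) := by
        apply Finset.sum_congr rfl; intro k _
        apply Finset.sum_congr rfl; intro j _
        rw [integral_const_mul, moment_integral ν x hx (k + j)]
    _ = ∫ t in Ioi (0:ℝ), ∑ k ∈ Finset.range (n + 1), ∑ j ∈ Finset.range (k + 1),
          D k j * (t ^ (ν - 1) * Real.exp (-t - x / t) * t ^ (k + j)) := by
        rw [integral_finset_sum _ (fun k _ => integrable_finset_sum _ (fun j _ => hint k j))]
        apply Finset.sum_congr rfl; intro k _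
        rw [integral_finset_sum _ (fun j _ => hint k j)]
    _ = ∫ t in Ioi (0:ℝ), t ^ (ν - 1) * Real.exp (-t - x / t) *
          (∑ k ∈ Finset.range (n + 1), f k * (-1 : ℝ) ^ k * k.factorial * t ^ k * laguerre k ν t) := by
        apply setIntegral_congr_fun measurableSet_Ioi
        intro t _
        dsimp only
        exact (hpt t).symm
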